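/- Let Γ be an artin algebra, 0 → A → B → C → 0 a short exact sequence in Γ-mod, and X a resolving subcategory of Γ-mod. If f: X → A and h: Z → C are right minimal X-approximations, then there exists a right X-approximation g: Y → B fitting into a commutative diagram with exact rows 0 → X → Y → Z → 0 over 0 → A → B → C → 0. -/

import Mathlib

open CategoryTheory Limits Opposite

/-- The Ext group `Ext^n(X, Y)` in the category of `Γ`-modules. -/
noncomputable abbrev extGrp (Γ : Type) [Ring Γ] (n : ℕ) (X Y : ModuleCat Γ) : ModuleCat ℤ :=
  ((Ext ℤ (ModuleCat Γ) n).obj (op X)).obj Y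

/-- The class of finitely generated `Γ`-modules. -/
def fgMod (Γ : Type) [Ring Γ] : Set (ModuleCat Γ) := {M | Module.Finite Γ M}

/-- A resolving subcategory of the category of finitely generated `Γ`-modules:
it consists of finitely generated modules, is closed under isomorphisms, contains all
(finitely generated) projective modules, and is closed under extensions, direct summands
and kernels of epimorphisms. -/
structure IsResolving (Γ : Type) [Ring Γ] (𝒳 : Set (ModuleCat Γ)) : Prop where
  subset_fg : 𝒳 ⊆ fgMod Γ
  iso_closed : ∀ M N : ModuleCat Γ, Nonempty (M ≅ N) → M ∈ 𝒳 → N ∈ 𝒳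
  proj_mem : ∀ M : ModuleCat Γ, M ∈ fgMod Γ → Projective M → M ∈ 𝒳
  ext_closed : ∀ S : ShortComplex (ModuleCat Γ), S.ShortExact →
    S.X₁ ∈ 𝒳 → S.X₃ ∈ 𝒳 → S.X₂ ∈ 𝒳
  summand_closed : ∀ M N : ModuleCat Γ, (M ⊞ N) ∈ 𝒳 → M ∈ 𝒳
  ker_epi_closed : ∀ S : ShortComplex (ModuleCat Γ), S.ShortExact →
    S.X₂ ∈ 𝒳 → S.X₃ ∈ 𝒳 → S.X₁ ∈ 𝒳

/-- A coresolving subcategory: consists of finitely generated modules, closed under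
isomorphisms, contains all (finitely generated) injective modules, and is closed under
extensions, direct summands and cokernels of monomorphisms. -/
structure IsCoresolving (Γ : Type) [Ring Γ] (𝒴 : Set (ModuleCat Γ)) : Prop where
  subset_fg : 𝒴 ⊆ fgMod Γ
  iso_closed : ∀ M N : ModuleCat Γ, Nonempty (M ≅ N) → M ∈ 𝒴 → N ∈ 𝒴
  inj_mem : ∀ M : ModuleCat Γ, M ∈ fgMod Γ → Injective M → M ∈ 𝒴
  ext_closed : ∀ S : ShortComplex (ModuleCat Γ), S.ShortExact →
    S.X₁ ∈ 𝒴 → S.X₃ ∈ 𝒴 → S.X₂ ∈ 𝒴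
  summand_closed : ∀ M N : ModuleCat Γ, (M ⊞ N) ∈ 𝒴 → M ∈ 𝒴
  coker_mono_closed : ∀ S : ShortComplex (ModuleCat Γ), S.ShortExact →
    S.X₁ ∈ 𝒴 → S.X₂ ∈ 𝒴 → S.X₃ ∈ 𝒴

/-- The right perpendicular category `𝒳^⊥ = ∩_{i ≥ 1} ker Ext^i(𝒳, −)`
inside the finitely generated modules. -/
def rightPerp (Γ : Type) [Ring Γ] (𝒳 : Set (ModuleCat Γ)) : Set (ModuleCat Γ) :=
  {M | M ∈ fgMod Γ ∧ ∀ X ∈ 𝒳, ∀ i : ℕ, 1 ≤ i → Subsingleton (extGrp Γ i X M)}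

/-- `f : C ⟶ M` is a right `𝒞`-approximation of `M`. -/
def IsRightApprox {𝒜 : Type*} [Category 𝒜] (𝒞 : Set 𝒜) {C M : 𝒜} (f : C ⟶ M) : Prop :=
  C ∈ 𝒞 ∧ ∀ C' ∈ 𝒞, ∀ g : C' ⟶ M, ∃ h : C' ⟶ C, h ≫ f = g

/-- A morphism `f : C ⟶ M` is right minimal if every endomorphism `φ` of `C` with
`φ ≫ f = f` is an automorphism. -/
def IsRightMinimal {𝒜 : Type*} [Category 𝒜] {C M : 𝒜} (f : C ⟶ M) : Prop :=
  ∀ φ : C ⟶ C, φ ≫ f = f → IsIso φ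


section HorseshoeAux

universe v
variable {Γ : Type} [Ring Γ]

lemma exists_proj_epi (M : ModuleCat.{v} Γ) (hM : M ∈ fgMod Γ) :
    ∃ (F : ModuleCat.{v} Γ), F ∈ fgMod Γ ∧ Projective F ∧ ∃ e : F ⟶ M, Function.Surjective e := by
  haveI : Module.Finite Γ M := hM
  obtain ⟨n, e, he⟩ := Module.Finite.exists_fin' Γ M
  refine ⟨ModuleCat.of Γ (ULift.{v} (Fin n → Γ)), ?_, ?_,
    ModuleCat.ofHom (e ∘ₗ ULift.moduleEquiv.toLinearMap), ?_⟩
  · show Module.Finite Γ (ULift.{v} (Fin n → Γ))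
    exact Module.Finite.equiv ULift.moduleEquiv.symm
  · exact ModuleCat.projective_of_free ((Pi.basisFun Γ (Fin n)).map ULift.moduleEquiv.symm)
  · exact he.comp (ULift.moduleEquiv).surjective



lemma mkSE {X₁ X₂ X₃ : ModuleCat.{v} Γ} (f : X₁ ⟶ X₂) (g : X₂ ⟶ X₃) (hfg : f ≫ g = 0)
    (hinj : Function.Injective f) (hsurj : Function.Surjective g)
    (hrk : LinearMap.range f.hom = LinearMap.ker g.hom) :
    (ShortComplex.mk f g hfg).ShortExact := by
  refine ShortComplex.ShortExact.mk' ?_ ?_ ?_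
  · rw [ShortComplex.moduleCat_exact_iff_range_eq_ker]; exact hrk
  · rw [ModuleCat.mono_iff_injective]; exact hinj
  · rw [ModuleCat.epi_iff_surjective]; exact hsurj

lemma wakamatsu_lift {𝒳 : Set (ModuleCat.{v} Γ)}
    (hext : ∀ S : ShortComplex (ModuleCat.{v} Γ), S.ShortExact → S.X₁ ∈ 𝒳 → S.X₃ ∈ 𝒳 → S.X₂ ∈ 𝒳)
    {X A : ModuleCat.{v} Γ} {f : X ⟶ A} (hf : IsRightApprox 𝒳 f) (hfmin : IsRightMinimal f)
    {W V : ModuleCat.{v} Γ} (hW : W ∈ 𝒳) (π : V ⟶ W) (hπ : Function.Surjective π)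
    (κ : ↥(LinearMap.ker (f.hom : X →ₗ[Γ] A)) →ₗ[Γ] V)
    (hκinj : Function.Injective κ)
    (hκrange : LinearMap.range κ = LinearMap.ker (π.hom : V →ₗ[Γ] W)) :
    ∃ σ : W ⟶ V, σ ≫ π = 𝟙 W := by
  -- the pushout of the extension along ker f → X
  set ν : ↥(LinearMap.ker (f.hom : X →ₗ[Γ] A)) →ₗ[Γ] ↥X × ↥V :=
    LinearMap.prod (LinearMap.ker (f.hom : X →ₗ[Γ] A)).subtype (-κ) with hν
  set N : Submodule Γ (↥X × ↥V) := LinearMap.range ν with hNdef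
  have hνapp : ∀ k, ν k = (↑k, -κ k) := fun k => rfl
  have hκ_ker : ∀ k, π (κ k) = 0 := by
    intro k
    have : κ k ∈ LinearMap.ker (π.hom : V →ₗ[Γ] W) := by rw [← hκrange]; exact ⟨k, rfl⟩
    exact this
  set P : ModuleCat.{v} Γ := ModuleCat.of Γ ((↥X × ↥V) ⧸ N) with hP
  set ι : X ⟶ P := ModuleCat.ofHom (N.mkQ ∘ₗ LinearMap.inl Γ ↥X ↥V) with hι
  set θ : V ⟶ P := ModuleCat.ofHom (N.mkQ ∘ₗ LinearMap.inr Γ ↥X ↥V) with hθ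
  have hNle : N ≤ LinearMap.ker ((π.hom : V →ₗ[Γ] W) ∘ₗ LinearMap.snd Γ ↥X ↥V) := by
    rintro ⟨x, v⟩ ⟨k, hk⟩
    rw [hνapp] at hk
    obtain ⟨hk1, hk2⟩ := Prod.mk.injEq .. ▸ hk
    simp only [LinearMap.mem_ker, LinearMap.comp_apply, LinearMap.snd_apply]
    rw [← hk2, map_neg, hκ_ker, neg_zero]
  set π' : P ⟶ W :=
    ModuleCat.ofHom (N.liftQ ((π.hom : V →ₗ[Γ] W) ∘ₗ LinearMap.snd Γ ↥X ↥V) hNle) with hπ'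
  have hιapp : ∀ x : ↥X, ι x = Submodule.Quotient.mk (x, 0) := fun x => rfl
  have hθapp : ∀ v : ↥V, θ v = Submodule.Quotient.mk (0, v) := fun v => rfl
  have hπ'app : ∀ p : ↥X × ↥V, π' (Submodule.Quotient.mk p) = π p.2 := fun p => rfl
  have hι_inj : Function.Injective ι := by
    intro x y hxy
    have h1 : ((x, (0:↥V)) - (y, (0:↥V))) ∈ N := by
      rw [← Submodule.Quotient.eq]
      exact hxy
    obtain ⟨k, hk⟩ := h1
    rw [hνapp] at hk
    have hk1 : (↑k : ↥X) = x - y := congrArg Prod.fst hk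
    have hk2 : -κ k = (0:↥V) - 0 := congrArg Prod.snd hk
    have hk0 : k = 0 := by
      apply hκinj
      rw [map_zero, ← neg_eq_zero, hk2, sub_zero]
    rw [hk0] at hk1
    have : x - y = 0 := by rw [← hk1]; rfl
    rw [sub_eq_zero] at this; exact this
  have hπ'_surj : Function.Surjective π' := by
    intro w
    obtain ⟨v, hv⟩ := hπ w
    exact ⟨Submodule.Quotient.mk (0, v), by rw [hπ'app]; exact hv⟩
  have hcomp0 : ι ≫ π' = 0 := by
    ext x
    show π' (ι x) = 0
    rw [hιapp, hπ'app, map_zero]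
  have hrk : LinearMap.range (ι.hom : X →ₗ[Γ] P) = LinearMap.ker (π'.hom : P →ₗ[Γ] W) := by
    apply le_antisymm
    · rintro p ⟨x, rfl⟩
      show π' (ι x) = 0
      rw [hιapp, hπ'app, map_zero]
    · rintro p hp
      obtain ⟨⟨x, v⟩, rfl⟩ := Submodule.Quotient.mk_surjective N p
      have hv : π v = 0 := hp
      have hvr : v ∈ LinearMap.range κ := by rw [hκrange]; exact hv
      obtain ⟨k, rfl⟩ := hvr
      refine ⟨x + (LinearMap.ker (f.hom : X →ₗ[Γ] A)).subtype k, ?_⟩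
      rw [hιapp]
      apply (Submodule.Quotient.eq N).mpr
      refine ⟨k, ?_⟩
      rw [hνapp]
      refine Prod.ext ?_ ?_ <;> simp
  -- P lies in 𝒳
  have hSE := mkSE ι π' hcomp0 hι_inj hπ'_surj hrk
  have hPmem : P ∈ 𝒳 := hext _ hSE hf.1 hW
  -- the map P → A extending f
  have hNle2 : N ≤ LinearMap.ker ((f.hom : X →ₗ[Γ] A) ∘ₗ LinearMap.fst Γ ↥X ↥V) := by
    rintro ⟨x, v⟩ ⟨k, hk⟩
    rw [hνapp] at hk
    have hk1 : (↑k : ↥X) = x := congrArg Prod.fst hk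
    simp only [LinearMap.mem_ker, LinearMap.comp_apply, LinearMap.fst_apply]
    rw [← hk1]
    exact k.2
  set πA : P ⟶ A :=
    ModuleCat.ofHom (N.liftQ ((f.hom : X →ₗ[Γ] A) ∘ₗ LinearMap.fst Γ ↥X ↥V) hNle2) with hπA
  have hπAapp : ∀ p : ↥X × ↥V, πA (Submodule.Quotient.mk p) = f p.1 := fun p => rfl
  obtain ⟨s, hs⟩ := hf.2 P hPmem πA
  set φ : X ⟶ X := ι ≫ s with hφdef
  have hφf : φ ≫ f = f := by
    ext x
    show f (s (ι x)) = f x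
    calc f (s (ι x)) = (s ≫ f) (ι x) := rfl
    _ = πA (ι x) := by rw [hs]
    _ = f x := by rw [hιapp, hπAapp]
  haveI := hfmin φ hφf
  set ψ : X ⟶ X := inv φ with hψdef
  have hψφ : ∀ x, ψ (φ x) = x := by
    intro x
    calc ψ (φ x) = (φ ≫ ψ) x := rfl
    _ = (𝟙 X : X ⟶ X) x := by rw [IsIso.hom_inv_id]
    _ = x := rfl
  have hψf : ψ ≫ f = f := by
    rw [hψdef, IsIso.inv_comp_eq, hφf]
  set ρ : V ⟶ X := θ ≫ s ≫ ψ with hρdef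
  have hρf : ∀ v' : ↥V, f (ρ v') = 0 := by
    intro v'
    calc f (ρ v') = (ψ ≫ f) (s (θ v')) := rfl
    _ = f (s (θ v')) := by rw [hψf]
    _ = (s ≫ f) (θ v') := rfl
    _ = πA (θ v') := by rw [hs]
    _ = f 0 := by rw [hθapp, hπAapp]
    _ = 0 := map_zero _
  have hρκ : ∀ k, ρ (κ k) = ((LinearMap.ker (f.hom : X →ₗ[Γ] A)).subtype k : ↥X) := by
    intro k
    have hθκ : θ (κ k) = ι ((LinearMap.ker (f.hom : X →ₗ[Γ] A)).subtype k) := by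
      rw [hθapp, hιapp]
      apply (Submodule.Quotient.eq N).mpr
      exact ⟨-k, by rw [hνapp]; refine Prod.ext ?_ ?_ <;> simp⟩
    calc ρ (κ k) = ψ (s (θ (κ k))) := rfl
    _ = ψ (s (ι _)) := by rw [hθκ]
    _ = ψ (φ _) := rfl
    _ = _ := hψφ _
  set ρK : ↥V →ₗ[Γ] ↥(LinearMap.ker (f.hom : X →ₗ[Γ] A)) :=
    LinearMap.codRestrict _ (ρ.hom : V →ₗ[Γ] X) hρf with hρK
  set τ : ↥V →ₗ[Γ] ↥V := LinearMap.id - κ ∘ₗ ρK with hτdef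
  have hτapp : ∀ v', τ v' = v' - κ (ρK v') := fun v' => rfl
  have hτ0 : ∀ v' : ↥V, π v' = 0 → τ v' = 0 := by
    intro v' hv'
    have : v' ∈ LinearMap.range κ := by rw [hκrange]; exact hv'
    obtain ⟨k, rfl⟩ := this
    rw [hτapp]
    have : ρK (κ k) = k := Subtype.ext (hρκ k)
    rw [this, sub_self]
  have hπτ : ∀ v' : ↥V, π (τ v') = π v' := by
    intro v'
    rw [hτapp, map_sub, hκ_ker, sub_zero]
  -- build the section
  set sec : ↥W → ↥V := Function.surjInv hπ with hsec
  have hsec_eq : ∀ w, π (sec w) = w := fun w => Function.surjInv_eq hπ w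
  have key : ∀ a b : ↥V, π a = π b → τ a = τ b := by
    intro a b hab
    have h0 : π (a - b) = 0 := by rw [map_sub, hab, sub_self]
    have := hτ0 _ h0
    rw [map_sub, sub_eq_zero] at this
    exact this
  refine ⟨ModuleCat.ofHom
    { toFun := fun w => τ (sec w)
      map_add' := by
        intro a b
        show τ (sec (a + b)) = τ (sec a) + τ (sec b)
        rw [← map_add]
        apply key
        rw [map_add, hsec_eq, hsec_eq, hsec_eq]
      map_smul' := by
        intro c a
        show τ (sec (c • a)) = c • τ (sec a)
        rw [← map_smul]
        apply key
        rw [map_smul, hsec_eq, hsec_eq] }, ?_⟩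
  ext w
  show π (τ (sec w)) = w
  rw [hπτ, hsec_eq]

lemma approx_surj {𝒳 : Set (ModuleCat.{v} Γ)}
    (hproj : ∀ M : ModuleCat.{v} Γ, M ∈ fgMod Γ → Projective M → M ∈ 𝒳)
    {X A : ModuleCat.{v} Γ} {f : X ⟶ A} (hf : IsRightApprox 𝒳 f) (hA : A ∈ fgMod Γ) :
    Function.Surjective f := by
  obtain ⟨F, hFfg, hFproj, e, he⟩ := exists_proj_epi A hA
  obtain ⟨ℓ, hℓ⟩ := hf.2 F (hproj F hFfg hFproj) e
  intro a
  obtain ⟨p, hp⟩ := he a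
  refine ⟨ℓ p, ?_⟩
  calc f (ℓ p) = (ℓ ≫ f) p := rfl
  _ = e p := by rw [hℓ]
  _ = a := hp


end HorseshoeAux


/-- generalized horseshoe lemma. Let `Γ` be an artin algebra,
`0 → A → B → C → 0` a short exact sequence of finitely generated `Γ`-modules, and `𝒳` a
resolving subcategory. If `f : X ⟶ A` and `h : Z ⟶ C` are right minimal
`𝒳`-approximations, then there is a right `𝒳`-approximation `g : Y ⟶ B` fitting into a
commutative diagram with exact rows `0 → X → Y → Z → 0` over `0 → A → B → C → 0`. -/
theorem horseshoe_for_right_approximations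
    (R : Type) [CommRing R] [IsArtinianRing R]
    (Γ : Type) [Ring Γ] [Algebra R Γ] [Module.Finite R Γ]
    (𝒳 : Set (ModuleCat Γ)) (h𝒳 : IsResolving Γ 𝒳)
    (S : ShortComplex (ModuleCat Γ)) (hS : S.ShortExact)
    (hfg₁ : S.X₁ ∈ fgMod Γ) (hfg₂ : S.X₂ ∈ fgMod Γ) (hfg₃ : S.X₃ ∈ fgMod Γ)
    (X Z : ModuleCat Γ) (f : X ⟶ S.X₁) (h : Z ⟶ S.X₃)
    (hf : IsRightApprox 𝒳 f) (hfmin : IsRightMinimal f)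
    (hh : IsRightApprox 𝒳 h) (hhmin : IsRightMinimal h) :
    ∃ (Y : ModuleCat Γ) (u : X ⟶ Y) (v : Y ⟶ Z) (g : Y ⟶ S.X₂) (huv : u ≫ v = 0),
      (ShortComplex.mk u v huv).ShortExact ∧
      IsRightApprox 𝒳 g ∧
      u ≫ g = f ≫ S.f ∧
      v ≫ h = g ≫ S.g := by
  classical
  have hSf_inj : Function.Injective S.f := hS.moduleCat_injective_f
  have hSg_surj : Function.Surjective S.g := hS.moduleCat_surjective_g
  have hSrk : LinearMap.range S.f.hom = LinearMap.ker S.g.hom := hS.exact.moduleCat_range_eq_ker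
  have hSfg0 : ∀ a : ↥S.X₁, S.g (S.f a) = 0 := fun a => S.moduleCat_zero_apply a
  have hfsurj : Function.Surjective f := approx_surj h𝒳.proj_mem hf hfg₁
  -- free cover of Z
  have hZfg : Z ∈ fgMod Γ := h𝒳.subset_fg hh.1
  obtain ⟨F, hFfg, hFproj, q, hq⟩ := exists_proj_epi Z hZfg
  haveI : Epi S.g := hS.epi_g
  haveI : Projective F := hFproj
  set r : F ⟶ S.X₂ := Projective.factorThru (q ≫ h) S.g with hrdef
  have hrc : r ≫ S.g = q ≫ h := Projective.factorThru_comp _ _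
  have hr : ∀ p : ↥F, S.g (r p) = h (q p) := by
    intro p
    calc S.g (r p) = (r ≫ S.g) p := rfl
    _ = (q ≫ h) p := by rw [hrc]
    _ = h (q p) := rfl
  -- the syzygy Ω of Z
  set Ω : Submodule Γ ↥F := LinearMap.ker (q.hom : F →ₗ[Γ] Z) with hΩdef
  set ΩM : ModuleCat Γ := ModuleCat.of Γ ↥Ω with hΩM
  set ιΩ : ΩM ⟶ F := ModuleCat.ofHom Ω.subtype with hιΩ
  have hΩmem : ΩM ∈ 𝒳 := by
    have hcomp : ιΩ ≫ q = 0 := by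
      ext ω
      exact ω.2
    have hse := mkSE ιΩ q hcomp Ω.injective_subtype hq
      (by show LinearMap.range Ω.subtype = _; rw [Submodule.range_subtype])
    exact h𝒳.ker_epi_closed _ hse (h𝒳.proj_mem F hFfg hFproj) hh.1
  -- α : Ω ⟶ A
  have hrΩ : ∀ ω : ↥Ω, r (Ω.subtype ω) ∈ LinearMap.range (S.f.hom : S.X₁ →ₗ[Γ] S.X₂) := by
    intro ω
    rw [hSrk]
    show S.g (r ↑ω) = 0
    rw [hr]
    have hω : q ↑ω = 0 := ω.2
    rw [hω, map_zero]
  set eA : ↥S.X₁ ≃ₗ[Γ] ↥(LinearMap.range (S.f.hom : S.X₁ →ₗ[Γ] S.X₂)) :=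
    LinearEquiv.ofInjective (S.f.hom : S.X₁ →ₗ[Γ] S.X₂) hSf_inj with heA
  set α : ΩM ⟶ S.X₁ := ModuleCat.ofHom (eA.symm.toLinearMap ∘ₗ
    LinearMap.codRestrict _ ((r.hom : F →ₗ[Γ] S.X₂) ∘ₗ Ω.subtype) hrΩ) with hαdef
  have hα : ∀ ω : ↥Ω, S.f (α ω) = r (Ω.subtype ω) := by
    intro ω
    show S.f (eA.symm ⟨r (Ω.subtype ω), hrΩ ω⟩) = r (Ω.subtype ω)
    have h2 := eA.apply_symm_apply ⟨r (Ω.subtype ω), hrΩ ω⟩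
    calc S.f (eA.symm ⟨r (Ω.subtype ω), hrΩ ω⟩)
        = ↑(eA (eA.symm ⟨r (Ω.subtype ω), hrΩ ω⟩)) := rfl
    _ = r (Ω.subtype ω) := by rw [h2]
  obtain ⟨β, hβc⟩ := hf.2 ΩM hΩmem α
  have hβ : ∀ ω : ↥Ω, f (β ω) = α ω := by
    intro ω
    calc f (β ω) = (β ≫ f) ω := rfl
    _ = α ω := by rw [hβc]
  -- construction of Y as pushout of Ω → X along Ω → F
  set νY : ↥Ω →ₗ[Γ] ↥X × ↥F := LinearMap.prod (β.hom : ΩM →ₗ[Γ] X) (-Ω.subtype) with hνY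
  have hνYapp : ∀ ω : ↥Ω, νY ω = (β ω, -(Ω.subtype ω)) := fun ω => rfl
  set NY : Submodule Γ (↥X × ↥F) := LinearMap.range νY with hNY
  set Y : ModuleCat Γ := ModuleCat.of Γ ((↥X × ↥F) ⧸ NY) with hY
  set u : X ⟶ Y := ModuleCat.ofHom (NY.mkQ ∘ₗ LinearMap.inl Γ ↥X ↥F) with hu
  have huapp : ∀ x : ↥X, u x = Submodule.Quotient.mk (x, 0) := fun x => rfl
  have hNYv : NY ≤ LinearMap.ker ((q.hom : F →ₗ[Γ] Z) ∘ₗ LinearMap.snd Γ ↥X ↥F) := by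
    rintro ⟨x, p⟩ ⟨ω, hω⟩
    rw [hνYapp] at hω
    have h2 : -(Ω.subtype ω) = p := congrArg Prod.snd hω
    simp only [LinearMap.mem_ker, LinearMap.comp_apply, LinearMap.snd_apply]
    rw [← h2, map_neg]
    have : q (Ω.subtype ω) = 0 := ω.2
    rw [this, neg_zero]
  set v : Y ⟶ Z := ModuleCat.ofHom (NY.liftQ ((q.hom : F →ₗ[Γ] Z) ∘ₗ LinearMap.snd Γ ↥X ↥F) hNYv)
    with hv
  have hvapp : ∀ p : ↥X × ↥F, v (Submodule.Quotient.mk p) = q p.2 := fun p => rfl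
  have hNYg : NY ≤ LinearMap.ker
      (LinearMap.coprod ((S.f.hom : S.X₁ →ₗ[Γ] S.X₂) ∘ₗ (f.hom : X →ₗ[Γ] S.X₁)) (r.hom : F →ₗ[Γ] S.X₂)) := by
    rintro ⟨x, p⟩ ⟨ω, hω⟩
    rw [hνYapp] at hω
    have h1 : (β ω : ↥X) = x := congrArg Prod.fst hω
    have h2 : -(Ω.subtype ω) = p := congrArg Prod.snd hω
    simp only [LinearMap.mem_ker, LinearMap.coprod_apply, LinearMap.comp_apply]
    rw [← h1, ← h2, map_neg, hβ, hα, add_neg_cancel]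
  set g : Y ⟶ S.X₂ := ModuleCat.ofHom (NY.liftQ
    (LinearMap.coprod ((S.f.hom : S.X₁ →ₗ[Γ] S.X₂) ∘ₗ (f.hom : X →ₗ[Γ] S.X₁)) (r.hom : F →ₗ[Γ] S.X₂)) hNYg)
    with hgdef
  have hgapp : ∀ p : ↥X × ↥F, g (Submodule.Quotient.mk p) = S.f (f p.1) + r p.2 := fun p => rfl
  -- exactness of 0 → X → Y → Z → 0
  have huv : u ≫ v = 0 := by
    ext x
    show v (u x) = 0
    rw [huapp, hvapp, map_zero]
  have hu_inj : Function.Injective u := by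
    intro x y hxy
    have h1 : ((x, (0:↥F)) - (y, (0:↥F))) ∈ NY := by
      rw [← Submodule.Quotient.eq]
      exact hxy
    obtain ⟨ω, hω⟩ := h1
    rw [hνYapp] at hω
    have h2 : -(Ω.subtype ω) = (0:↥F) - 0 := congrArg Prod.snd hω
    have hω0 : ω = 0 := by
      have : Ω.subtype ω = 0 := by
        rw [← neg_eq_zero, h2, sub_zero]
      exact Ω.injective_subtype (by rw [this, map_zero])
    have h1' : (β ω : ↥X) = x - y := congrArg Prod.fst hω
    rw [hω0, map_zero] at h1'
    rw [← sub_eq_zero, ← h1']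
  have hv_surj : Function.Surjective v := by
    intro z
    obtain ⟨p, hp⟩ := hq z
    exact ⟨Submodule.Quotient.mk (0, p), by rw [hvapp]; exact hp⟩
  have hrkuv : LinearMap.range (u.hom : X →ₗ[Γ] Y) = LinearMap.ker (v.hom : Y →ₗ[Γ] Z) := by
    apply le_antisymm
    · rintro y ⟨x, rfl⟩
      show v (u x) = 0
      rw [huapp, hvapp, map_zero]
    · rintro y hy
      obtain ⟨⟨x, p⟩, rfl⟩ := Submodule.Quotient.mk_surjective NY y
      have hp : q p = 0 := hy
      refine ⟨x + β ⟨p, hp⟩, ?_⟩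
      rw [huapp]
      apply (Submodule.Quotient.eq NY).mpr
      refine ⟨⟨p, hp⟩, ?_⟩
      rw [hνYapp]
      refine Prod.ext ?_ ?_ <;> simp
  have hSE : (ShortComplex.mk u v huv).ShortExact := mkSE u v huv hu_inj hv_surj hrkuv
  have hYmem : Y ∈ 𝒳 := h𝒳.ext_closed _ hSE hf.1 hh.1
  -- the two commutation relations
  have hcomm1 : u ≫ g = f ≫ S.f := by
    ext x
    show g (u x) = S.f (f x)
    rw [huapp, hgapp]
    show S.f (f x) + r 0 = S.f (f x)
    rw [map_zero, add_zero]
  have hcomm2 : v ≫ h = g ≫ S.g := by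
    refine ModuleCat.hom_ext (LinearMap.ext fun y => ?_)
    obtain ⟨⟨x, p⟩, rfl⟩ := Submodule.Quotient.mk_surjective NY y
    show h (v (Submodule.Quotient.mk (x, p))) = S.g (g (Submodule.Quotient.mk (x, p)))
    rw [hvapp, hgapp, map_add, hSfg0, hr, zero_add]
  refine ⟨Y, u, v, g, huv, hSE, ⟨hYmem, ?_⟩, hcomm1, hcomm2⟩
  -- g is a right 𝒳-approximation
  intro W hW w
  obtain ⟨t, htc⟩ := hh.2 W hW (w ≫ S.g)
  have ht : ∀ w₀ : ↥W, h (t w₀) = S.g (w w₀) := by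
    intro w₀
    calc h (t w₀) = (t ≫ h) w₀ := rfl
    _ = (w ≫ S.g) w₀ := by rw [htc]
    _ = S.g (w w₀) := rfl
  -- the pullback of g and w
  set d1 : ↥Y × ↥W →ₗ[Γ] ↥Z :=
    (v.hom : Y →ₗ[Γ] Z) ∘ₗ LinearMap.fst Γ ↥Y ↥W - (t.hom : W →ₗ[Γ] Z) ∘ₗ LinearMap.snd Γ ↥Y ↥W with hd1
  set d2 : ↥Y × ↥W →ₗ[Γ] ↥S.X₂ :=
    (g.hom : Y →ₗ[Γ] S.X₂) ∘ₗ LinearMap.fst Γ ↥Y ↥W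
      - (w.hom : W →ₗ[Γ] S.X₂) ∘ₗ LinearMap.snd Γ ↥Y ↥W with hd2
  set Vsub : Submodule Γ (↥Y × ↥W) := LinearMap.ker d1 ⊓ LinearMap.ker d2 with hVsub
  have hVmem : ∀ m : ↥Y × ↥W, m ∈ Vsub ↔ (v m.1 = t m.2 ∧ g m.1 = w m.2) := by
    intro m
    rw [hVsub, Submodule.mem_inf]
    constructor
    · rintro ⟨h1, h2⟩
      constructor
      · have := h1
        simp only [LinearMap.mem_ker, hd1, LinearMap.sub_apply, LinearMap.comp_apply,
          LinearMap.fst_apply, LinearMap.snd_apply, sub_eq_zero] at this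
        exact this
      · have := h2
        simp only [LinearMap.mem_ker, hd2, LinearMap.sub_apply, LinearMap.comp_apply,
          LinearMap.fst_apply, LinearMap.snd_apply, sub_eq_zero] at this
        exact this
    · rintro ⟨h1, h2⟩
      constructor
      · simp only [LinearMap.mem_ker, hd1, LinearMap.sub_apply, LinearMap.comp_apply,
          LinearMap.fst_apply, LinearMap.snd_apply, sub_eq_zero]
        exact h1
      · simp only [LinearMap.mem_ker, hd2, LinearMap.sub_apply, LinearMap.comp_apply,
          LinearMap.fst_apply, LinearMap.snd_apply, sub_eq_zero]
        exact h2
  set V₁ : ModuleCat Γ := ModuleCat.of Γ ↥Vsub with hV₁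
  set π₁ : V₁ ⟶ W := ModuleCat.ofHom (LinearMap.snd Γ ↥Y ↥W ∘ₗ Vsub.subtype) with hπ₁
  have hπ₁app : ∀ m : ↥Vsub, π₁ m = m.1.2 := fun m => rfl
  have hπ₁surj : Function.Surjective π₁ := by
    intro w₀
    obtain ⟨p, hp⟩ := hq (t w₀)
    have hb : w w₀ - r p ∈ LinearMap.range (S.f.hom : S.X₁ →ₗ[Γ] S.X₂) := by
      rw [hSrk]
      show S.g (w w₀ - r p) = 0
      rw [map_sub, hr, hp, ← ht, sub_self]
    obtain ⟨a, ha⟩ := hb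
    obtain ⟨x, hx⟩ := hfsurj a
    refine ⟨⟨(Submodule.Quotient.mk (x, p), w₀), ?_⟩, rfl⟩
    rw [hVmem]
    constructor
    · rw [hvapp]
      exact hp
    · rw [hgapp, hx, ha]
      show w w₀ - r p + r p = w w₀
      rw [sub_add_cancel]
  set pr1 : V₁ ⟶ Y := ModuleCat.ofHom (LinearMap.fst Γ ↥Y ↥W ∘ₗ Vsub.subtype) with hpr1
  have hVfact : ∀ m : ↥V₁, v (pr1 m) = t (π₁ m) ∧ g (pr1 m) = w (π₁ m) :=
    fun m => (hVmem (Vsub.subtype m)).mp (Subtype.prop m)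
  set κ : ↥(LinearMap.ker (f.hom : X →ₗ[Γ] S.X₁)) →ₗ[Γ] ↥V₁ :=
    LinearMap.codRestrict Vsub
      (LinearMap.prod ((u.hom : X →ₗ[Γ] Y) ∘ₗ (LinearMap.ker (f.hom : X →ₗ[Γ] S.X₁)).subtype) 0)
      (by
        intro k
        rw [hVmem]
        have hk : f ((LinearMap.ker (f.hom : X →ₗ[Γ] S.X₁)).subtype k) = 0 := k.2
        constructor
        · show v (u ((LinearMap.ker (f.hom : X →ₗ[Γ] S.X₁)).subtype k)) = t 0
          rw [huapp, hvapp, map_zero, map_zero]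
        · show g (u ((LinearMap.ker (f.hom : X →ₗ[Γ] S.X₁)).subtype k)) = w 0
          rw [huapp, hgapp]
          show S.f (f ((LinearMap.ker (f.hom : X →ₗ[Γ] S.X₁)).subtype k)) + r 0 = w 0
          rw [hk, map_zero, map_zero, map_zero, add_zero]) with hκ
  have hκpr1 : ∀ k, pr1 (κ k) = u ((LinearMap.ker (f.hom : X →ₗ[Γ] S.X₁)).subtype k) :=
    fun k => rfl
  have hκπ₁ : ∀ k, π₁ (κ k) = 0 := fun k => rfl
  have hκinj : Function.Injective κ := by
    intro k k' hkk
    have h1 := congrArg (fun m : ↥V₁ => pr1 m) hkk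
    simp only [hκpr1] at h1
    exact Subtype.ext (hu_inj h1)
  have hκrange : LinearMap.range κ = LinearMap.ker (π₁.hom : V₁ →ₗ[Γ] W) := by
    apply le_antisymm
    · rintro m ⟨k, rfl⟩
      show π₁ (κ k) = 0
      exact hκπ₁ k
    · rintro m hm
      have hm2 : π₁ m = 0 := hm
      have hv0 : v (pr1 m) = 0 := by rw [(hVfact m).1, hm2, map_zero]
      have hg0 : g (pr1 m) = 0 := by rw [(hVfact m).2, hm2, map_zero]
      have hmr : pr1 m ∈ LinearMap.range (u.hom : X →ₗ[Γ] Y) := by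
        rw [hrkuv]
        exact hv0
      obtain ⟨x, hx⟩ := hmr
      have hfx : f x = 0 := by
        apply hSf_inj
        rw [map_zero]
        have hgu : g (u x) = 0 := by rw [hx]; exact hg0
        rw [huapp, hgapp] at hgu
        show S.f (f x) = 0
        rw [← hgu]
        show S.f (f x) = S.f (f x) + r 0
        rw [map_zero, add_zero]
      refine ⟨⟨x, hfx⟩, Vsub.injective_subtype ?_⟩
      show ((u x, 0) : ↥Y × ↥W) = Vsub.subtype m
      refine Prod.ext ?_ ?_
      · exact hx
      · exact hm2.symm
  obtain ⟨σ, hσc⟩ := wakamatsu_lift h𝒳.ext_closed hf hfmin hW π₁ hπ₁surj κ hκinj hκrange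
  have hσ : ∀ w₀ : ↥W, π₁ (σ w₀) = w₀ := by
    intro w₀
    calc π₁ (σ w₀) = (σ ≫ π₁) w₀ := rfl
    _ = w₀ := by rw [hσc]; rfl
  refine ⟨σ ≫ pr1, ?_⟩
  ext w₀
  show g (pr1 (σ w₀)) = w w₀
  rw [(hVfact (σ w₀)).2, hσ w₀]
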